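/- Every solution (S(t), Q(t), H(t), R(t)) of the linear disease-free system S′ = Λ + λQ − (μ+q)S, Q′ = qS − (μ+λ)Q, H′ = −(μ+d_H+γ_H)H, R′ = γ_H·H − μR converges as t → ∞ to the equilibrium (S°, Q°, 0, 0). -/

import Mathlib

open Filter Real

/-- Scalar exponential decay: if `f' = -c f` on `[0,∞)` with `c > 0`, then `f → 0`. -/
lemma expDecay_aux (c : ℝ) (hc : 0 < c) (f : ℝ → ℝ)
    (hf : ∀ t : ℝ, 0 ≤ t → HasDerivWithinAt f (-(c * f t)) (Set.Ici (0 : ℝ)) t) :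
    Filter.Tendsto f Filter.atTop (nhds 0) := by
  set g : ℝ → ℝ := fun t => f t * Real.exp (c * t) with hgdef
  have hg : ∀ t : ℝ, 0 ≤ t → HasDerivWithinAt g 0 (Set.Ici (0 : ℝ)) t := by
    intro t ht
    have he : HasDerivAt (fun s : ℝ => Real.exp (c * s)) (Real.exp (c * t) * c) t := by
      simpa using ((hasDerivAt_id t).const_mul c).exp
    have h2 := (hf t ht).mul he.hasDerivWithinAt
    refine h2.congr_deriv ?_
    ring
  have key : ∀ t : ℝ, 0 ≤ t → g t = g 0 := by
    intro t ht
    have hcont : ContinuousOn g (Set.Icc 0 t) := fun x hx =>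
      ((hg x hx.1).continuousWithinAt).mono (fun y hy => hy.1)
    have hderiv : ∀ x ∈ Set.Ico (0 : ℝ) t, HasDerivWithinAt g 0 (Set.Ici x) x := fun x hx =>
      (hg x hx.1).mono (Set.Ici_subset_Ici.2 hx.1)
    exact constant_of_has_deriv_right_zero hcont hderiv t (Set.right_mem_Icc.2 ht)
  have hfe : ∀ t : ℝ, 0 ≤ t → f t = f 0 * Real.exp (-(c * t)) := by
    intro t ht
    have h0 : g t = f 0 := by
      rw [key t ht]; simp [hgdef]
    have hne : Real.exp (c * t) ≠ 0 := (Real.exp_pos _).ne'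
    have : f t * Real.exp (c * t) = f 0 := h0
    rw [Real.exp_neg]
    field_simp
    linarith [this]
  have hlim : Filter.Tendsto (fun t : ℝ => f 0 * Real.exp (-(c * t))) Filter.atTop (nhds 0) := by
    have h1 : Filter.Tendsto (fun t : ℝ => -(c * t)) Filter.atTop Filter.atBot := by
      have : Filter.Tendsto (fun t : ℝ => c * t) Filter.atTop Filter.atTop :=
        Filter.Tendsto.const_mul_atTop hc Filter.tendsto_id
      exact Filter.tendsto_neg_atBot_iff.mpr this
    have h2 := Real.tendsto_exp_atBot.comp h1
    simpa using h2.const_mul (f 0)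
  refine hlim.congr' ?_
  filter_upwards [Filter.eventually_ge_atTop (0 : ℝ)] with t ht
  exact (hfe t ht).symm

/-- every solution of the linear disease-free system converges to
`(S°, Q°, 0, 0)` as `t → ∞`. -/
theorem covid_disease_free_linear_system_GAS
    (Λ q lam μ dH γH : ℝ)
    (hΛ : 0 < Λ) (hq : 0 < q) (hlam : 0 < lam) (hμ : 0 < μ) (hdH : 0 < dH) (hγH : 0 < γH)
    (S Q H R : ℝ → ℝ)
    (hS : ∀ t : ℝ, 0 ≤ t →
      HasDerivWithinAt S (Λ + lam * Q t - (μ + q) * S t) (Set.Ici (0 : ℝ)) t)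
    (hQ : ∀ t : ℝ, 0 ≤ t →
      HasDerivWithinAt Q (q * S t - (μ + lam) * Q t) (Set.Ici (0 : ℝ)) t)
    (hH : ∀ t : ℝ, 0 ≤ t →
      HasDerivWithinAt H (-((μ + dH + γH) * H t)) (Set.Ici (0 : ℝ)) t)
    (hR : ∀ t : ℝ, 0 ≤ t →
      HasDerivWithinAt R (γH * H t - μ * R t) (Set.Ici (0 : ℝ)) t) :
    Filter.Tendsto S Filter.atTop (nhds (Λ / μ * ((μ + lam) / (μ + q + lam)))) ∧
    Filter.Tendsto Q Filter.atTop (nhds (Λ / μ * (q / (μ + q + lam)))) ∧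
    Filter.Tendsto H Filter.atTop (nhds 0) ∧
    Filter.Tendsto R Filter.atTop (nhds 0) := by
  have ha : (0 : ℝ) < μ + q + lam := by linarith
  have hql : (0 : ℝ) < q + lam := by linarith
  -- N = S + Q - Λ/μ decays
  have hN : Filter.Tendsto (fun t => S t + Q t - Λ / μ) Filter.atTop (nhds 0) := by
    apply expDecay_aux μ hμ
    intro t ht
    have h := ((hS t ht).add (hQ t ht)).sub_const (Λ / μ)
    refine h.congr_deriv ?_
    field_simp
    ring
  -- M = q S - lam Q - Λ q / (μ+q+lam) decays
  have hM : Filter.Tendsto (fun t => q * S t - lam * Q t - Λ * q / (μ + q + lam))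
      Filter.atTop (nhds 0) := by
    apply expDecay_aux (μ + q + lam) ha
    intro t ht
    have h := (((hS t ht).const_mul q).sub ((hQ t ht).const_mul lam)).sub_const
      (Λ * q / (μ + q + lam))
    refine h.congr_deriv ?_
    field_simp
    ring
  -- H decays
  have hHlim : Filter.Tendsto H Filter.atTop (nhds 0) :=
    expDecay_aux (μ + dH + γH) (by linarith) H hH
  -- S converges
  have hSlim : Filter.Tendsto S Filter.atTop (nhds (Λ / μ * ((μ + lam) / (μ + q + lam)))) := by
    have hid : ∀ t, (lam * (S t + Q t - Λ / μ) +
        (q * S t - lam * Q t - Λ * q / (μ + q + lam))) / (q + lam) +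
        Λ / μ * ((μ + lam) / (μ + q + lam)) = S t := by
      intro t
      field_simp
      ring
    have h := (((hN.const_mul lam).add hM).div_const (q + lam)).add_const
      (Λ / μ * ((μ + lam) / (μ + q + lam)))
    have h' := h.congr hid
    simpa using h'
  -- Q converges
  have hQlim : Filter.Tendsto Q Filter.atTop (nhds (Λ / μ * (q / (μ + q + lam)))) := by
    have hid : ∀ t, (q * (S t + Q t - Λ / μ) -
        (q * S t - lam * Q t - Λ * q / (μ + q + lam))) / (q + lam) +
        Λ / μ * (q / (μ + q + lam)) = Q t := by
      intro t
      field_simp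
      ring
    have h := (((hN.const_mul q).sub hM).div_const (q + lam)).add_const
      (Λ / μ * (q / (μ + q + lam)))
    have h' := h.congr hid
    simpa using h'
  -- R converges: P = R + (γH/(dH+γH)) H decays
  have hP : Filter.Tendsto (fun t => R t + γH / (dH + γH) * H t) Filter.atTop (nhds 0) := by
    apply expDecay_aux μ hμ
    intro t ht
    have h := (hR t ht).add ((hH t ht).const_mul (γH / (dH + γH)))
    refine h.congr_deriv ?_
    have hd : dH + γH ≠ 0 := by positivity
    field_simp
    ring
  have hRlim : Filter.Tendsto R Filter.atTop (nhds 0) := by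
    have h := hP.sub (hHlim.const_mul (γH / (dH + γH)))
    have h' := h.congr (fun t => by ring)
    simpa using h'
  exact ⟨hSlim, hQlim, hHlim, hRlim⟩
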